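/- If q^λ ≠ 1, then dim(ℂ^{(N+1)m}/(K + L)) = (N+1)m − Σ_{i=0}^N dim ker B_i − dim ker(Σ_{j=0}^N B_j − (1 − q^λ)·1_m). -/
import Mathlib

lemma qmc_sum_mulVec {n : ℕ} {ι : Type*} (s : Finset ι)
    (B : ι → Matrix (Fin n) (Fin n) ℂ) (w : Fin n → ℂ) :
    (∑ j ∈ s, B j).mulVec w = ∑ j ∈ s, (B j).mulVec w := by
  induction s using Finset.cons_induction with
  | empty => simp
  | cons a s ha ih => simp [Finset.sum_cons, Matrix.add_mulVec, ih]

set_option maxHeartbeats 1000000 in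
/-- Dimension formula: if `q^λ ≠ 1` (written `c ≠ 1`), then
`dim(ℂ^{(N+1)m}/(K + L)) = (N+1)m − Σ_i dim ker B_i − dim ker(Σ_j B_j − (1−q^λ)·1_m)`,
stated in the additive form. -/
theorem qmc_dimension_formula (m N : ℕ) (c : ℂ) (hc : c ≠ 1)
    (B : Fin (N + 1) → Matrix (Fin m) (Fin m) ℂ)
    (K : Submodule ℂ (Fin (N + 1) → Fin m → ℂ))
    (hK : K = Submodule.pi Set.univ fun i => LinearMap.ker (B i).mulVecLin)
    (Fhat : (Fin (N + 1) → Fin m → ℂ) →ₗ[ℂ] (Fin (N + 1) → Fin m → ℂ))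
    (hFhat : ∀ v, Fhat v = fun _ => ∑ j, (B j).mulVec (v j))
    (L : Submodule ℂ (Fin (N + 1) → Fin m → ℂ))
    (hL : L = LinearMap.ker (Fhat - (1 - c) • LinearMap.id)) :
    Module.finrank ℂ ((Fin (N + 1) → Fin m → ℂ) ⧸ (K ⊔ L))
      + (∑ i, Module.finrank ℂ (LinearMap.ker (B i).mulVecLin))
      + Module.finrank ℂ
          (LinearMap.ker ((∑ j, B j) - (1 - c) • (1 : Matrix (Fin m) (Fin m) ℂ)).mulVecLin)
      = (N + 1) * m := by
  classical
  have hc' : (1 : ℂ) - c ≠ 0 := sub_ne_zero.mpr (Ne.symm hc)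
  set M : Matrix (Fin m) (Fin m) ℂ :=
    (∑ j, B j) - (1 - c) • (1 : Matrix (Fin m) (Fin m) ℂ) with hM
  -- membership in K
  have hKmem : ∀ v, v ∈ K ↔ ∀ i, (B i).mulVec (v i) = 0 := by
    intro v
    rw [hK]
    simp [Submodule.mem_pi, Matrix.mulVecLin_apply]
  -- membership in L
  have hLmem : ∀ v, v ∈ L ↔ ∀ i, ∑ j, (B j).mulVec (v j) = (1 - c) • v i := by
    intro v
    rw [hL, LinearMap.mem_ker]
    constructor
    · intro h i
      have := congrFun h i
      simp only [LinearMap.sub_apply, LinearMap.smul_apply, LinearMap.id_apply,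
        Pi.sub_apply, Pi.smul_apply, Pi.zero_apply, hFhat, sub_eq_zero] at this
      exact this
    · intro h
      funext i
      simp only [LinearMap.sub_apply, LinearMap.smul_apply, LinearMap.id_apply,
        Pi.sub_apply, Pi.smul_apply, Pi.zero_apply, hFhat, sub_eq_zero]
      exact h i
  -- membership in ker M
  have hMmem : ∀ w, w ∈ LinearMap.ker M.mulVecLin ↔
      ∑ j, (B j).mulVec w = (1 - c) • w := by
    intro w
    rw [LinearMap.mem_ker, Matrix.mulVecLin_apply, hM, Matrix.sub_mulVec,
      sub_eq_zero, Matrix.smul_mulVec, Matrix.one_mulVec, qmc_sum_mulVec]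
  -- K ⊓ L = ⊥
  have hdisj : K ⊓ L = ⊥ := by
    rw [eq_bot_iff]
    intro v hv
    obtain ⟨hvK, hvL⟩ := hv
    have h1 : ∀ i, ∑ j, (B j).mulVec (v j) = (1 - c) • v i := (hLmem v).1 hvL
    have h2 : ∀ i, (B i).mulVec (v i) = 0 := (hKmem v).1 hvK
    have hz : ∑ j, (B j).mulVec (v j) = 0 := by simp [h2]
    have : ∀ i, v i = 0 := by
      intro i
      have := (h1 i).symm.trans hz
      exact smul_eq_zero.mp this |>.resolve_left hc'
    exact Submodule.mem_bot _ |>.mpr (funext this)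
  -- rank of K
  have hKrank : Module.finrank ℂ K
      = ∑ i, Module.finrank ℂ (LinearMap.ker (B i).mulVecLin) := by
    have eK : (∀ i, LinearMap.ker (B i).mulVecLin) ≃ₗ[ℂ] K :=
      { toFun := fun f => ⟨fun i => (f i).1, (hKmem _).2 fun i => (f i).2⟩
        map_add' := fun a b => rfl
        map_smul' := fun r a => rfl
        invFun := fun v => fun i => ⟨v.1 i, (hKmem v.1).1 v.2 i⟩
        left_inv := fun f => rfl
        right_inv := fun v => rfl }
    rw [← eK.finrank_eq, Module.finrank_pi_fintype]
  -- rank of L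
  have hconstL : ∀ v ∈ L, ∀ i, v i = v 0 := by
    intro v hv i
    have h1 := (hLmem v).1 hv
    exact smul_right_injective _ hc' ((h1 i).symm.trans (h1 0))
  have hLrank : Module.finrank ℂ L
      = Module.finrank ℂ (LinearMap.ker M.mulVecLin) := by
    have eL : (LinearMap.ker M.mulVecLin) ≃ₗ[ℂ] L :=
      { toFun := fun w => ⟨fun _ => w.1,
          (hLmem _).2 fun i => by
            exact (hMmem w.1).1 w.2⟩
        map_add' := fun a b => rfl
        map_smul' := fun r a => rfl
        invFun := fun v => ⟨v.1 0, (hMmem _).2 (by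
          have h1 := (hLmem v.1).1 v.2
          calc ∑ j, (B j).mulVec (v.1 0) = ∑ j, (B j).mulVec (v.1 j) := by
                refine Finset.sum_congr rfl fun j _ => ?_
                rw [hconstL v.1 v.2 j]
            _ = (1 - c) • v.1 0 := h1 0)⟩
        left_inv := fun w => rfl
        right_inv := fun v => Subtype.ext (funext fun i => (hconstL v.1 v.2 i).symm) }
    exact (eL.finrank_eq).symm
  have htot : Module.finrank ℂ (Fin (N + 1) → Fin m → ℂ) = (N + 1) * m := by
    simp [Module.finrank_pi_fintype]
  have hsum := Submodule.finrank_sup_add_finrank_inf_eq K L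
  rw [hdisj, finrank_bot, add_zero, hKrank, hLrank] at hsum
  have hquot := Submodule.finrank_quotient_add_finrank (K ⊔ L)
  rw [htot] at hquot
  omega
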